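/- (Monotonicity of the u-subdifferential.) Suppose u satisfies the Spence–Mirrlees condition and f : D_y → ℝ. Let y, ŷ ∈ D_y with y < ŷ, and suppose z ∈ ∂^u f(y) and ẑ ∈ ∂^u f(ŷ). Then ẑ ≥ z. -/

import Mathlib

open Set

/-- The `u`-dual of a real-valued function `f` on `Dy`:
`f^u(z) = sup_{y ∈ Dy} (u(y,z) - f(y))`, valued in `EReal`. -/
noncomputable def uDual (Dy : Set ℝ) (u : ℝ → ℝ → ℝ) (f : ℝ → ℝ) (z : ℝ) : EReal :=
  ⨆ y ∈ Dy, ((u y z : EReal) - (f y : EReal))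

/-- The `u`-subdifferential of `f` at `y`:
`∂^u f(y) = { z ∈ Dz : f(y) + f^u(z) = u(y,z) }`. -/
def uSubdiff (Dy Dz : Set ℝ) (u : ℝ → ℝ → ℝ) (f : ℝ → ℝ) (y : ℝ) : Set ℝ :=
  {z | z ∈ Dz ∧ (f y : EReal) + uDual Dy u f z = (u y z : EReal)}

/-- The Spence–Mirrlees condition: `u` is C², `z ↦ u_y(y,z)` is strictly increasing on
`Dz` for each `y ∈ Dy`, and `y ↦ u_z(y,z)` is strictly increasing on `Dy` for each
`z ∈ Dz`. -/
def SpenceMirrlees (Dy Dz : Set ℝ) (u : ℝ → ℝ → ℝ) : Prop :=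
  ContDiff ℝ 2 (Function.uncurry u) ∧
  (∀ y ∈ Dy, StrictMonoOn (fun z => deriv (fun y' => u y' z) y) Dz) ∧
  (∀ z ∈ Dz, StrictMonoOn (fun y => deriv (fun z' => u y z') z) Dy)

/-- Key inequality extracted from membership in the subdifferential. -/
lemma uSubdiff_ineq (Dy Dz : Set ℝ) (u : ℝ → ℝ → ℝ) (f : ℝ → ℝ)
    (y y' : ℝ) (hy' : y' ∈ Dy) (z : ℝ) (hz : z ∈ uSubdiff Dy Dz u f y) :
    u y' z - f y' + f y ≤ u y z := by
  have hsup : ((u y' z : EReal) - (f y' : EReal)) ≤ uDual Dy u f z := by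
    exact le_iSup₂ (f := fun a (_ : a ∈ Dy) => ((u a z : EReal) - (f a : EReal))) y' hy'
  have h := add_le_add_right hsup (f y : EReal)
  rw [hz.2] at h
  have hcoe : ((u y' z : EReal) - (f y' : EReal)) = ((u y' z - f y' : ℝ) : EReal) := by
    rw [EReal.coe_sub]
  rw [hcoe, ← EReal.coe_add] at h
  exact_mod_cast (by rw [add_comm]; exact h : ((u y' z - f y' + f y : ℝ) : EReal) ≤ (u y z : EReal))

/-- Monotonicity of the `u`-subdifferential: under the Spence–Mirrlees condition, if
`y < yh`, `z ∈ ∂^u f(y)` and `zh ∈ ∂^u f(yh)`, then `zh ≥ z`. -/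
theorem uSubdiff_monotone
    (Dy Dz : Set ℝ) (hDy : Dy.Nonempty) (hDz : Dz.Nonempty)
    (hDyI : Dy.OrdConnected) (hDzI : Dz.OrdConnected)
    (u : ℝ → ℝ → ℝ) (hSM : SpenceMirrlees Dy Dz u) (f : ℝ → ℝ)
    (y yh : ℝ) (hy : y ∈ Dy) (hyh : yh ∈ Dy) (hlt : y < yh)
    (z zh : ℝ) (hz : z ∈ uSubdiff Dy Dz u f y) (hzh : zh ∈ uSubdiff Dy Dz u f yh) :
    z ≤ zh := by
  by_contra hcon
  push_neg at hcon
  -- hcon : zh < z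
  have h1 : u yh z - f yh + f y ≤ u y z := uSubdiff_ineq Dy Dz u f y yh hyh z hz
  have h2 : u y zh - f y + f yh ≤ u yh zh := uSubdiff_ineq Dy Dz u f yh y hy zh hzh
  -- so g yh ≤ g y where g y' = u y' z - u y' zh
  set g : ℝ → ℝ := fun y' => u y' z - u y' zh with hg
  have hgle : g yh ≤ g y := by simp only [hg]; linarith
  -- differentiability
  have hdiff : ∀ c : ℝ, Differentiable ℝ (fun y' => u y' c) := by
    intro c
    have := (hSM.1.differentiable (by norm_num))
    exact this.comp (differentiable_id.prodMk (differentiable_const c))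
  have hgdiff : Differentiable ℝ g := (hdiff z).sub (hdiff zh)
  -- mean value theorem
  obtain ⟨c, hc, hderiv⟩ := exists_deriv_eq_slope g hlt
    (hgdiff.continuous.continuousOn) (hgdiff.differentiableOn)
  have hcDy : c ∈ Dy := hDyI.out hy hyh ⟨hc.1.le, hc.2.le⟩
  have hpos : 0 < deriv g c := by
    have : deriv g c = deriv (fun y' => u y' z) c - deriv (fun y' => u y' zh) c := by
      simp only [hg]
      exact deriv_sub ((hdiff z) c) ((hdiff zh) c)
    rw [this]
    have := hSM.2.1 c hcDy hzh.1 hz.1 hcon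
    linarith
  have hdivpos : 0 < (g yh - g y) / (yh - y) := hderiv ▸ hpos
  have hyy : 0 < yh - y := by linarith
  have hgy : 0 < g yh - g y := by
    have h := mul_pos hdivpos hyy
    rwa [div_mul_cancel₀ _ hyy.ne'] at h
  linarith
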